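/- Let d ≥ 1, n ≥ 0, and let p_{n-1} : ℝ^d → ℝ^{r_{n-1}}, p_n : ℝ^d → ℝ^{r_n}, p_{n+1} : ℝ^d → ℝ^{r_{n+1}} be vector-valued functions (with p_{-1} := 0). Suppose that for every i ∈ {1,…,d} there are matrices A_{n+1,i} ∈ ℝ^{r_n×r_n}, B_{n+1,i} ∈ ℝ^{r_n×r_{n+1}}, B_{n,i} ∈ ℝ^{r_{n-1}×r_n} such that x_i p_n(x) = B_{n+1,i} p_{n+1}(x) + A_{n+1,i} p_n(x) + B_{n,i}^T p_{n-1}(x) for all x ∈ ℝ^d. Suppose further that the stacked matrix B_{n+1} ∈ ℝ^{d·r_n × r_{n+1}} obtained by vertically concatenating B_{n+1,1},…,B_{n+1,d} has rank r_{n+1}, and that Λ_{n+1} := Σ_{i=1}^d B_{n+1,i}^T B_{n+1,i} is a diagonal matrix. Then Λ_{n+1} is positive definite (hence invertible), and for all x ∈ ℝ^d: Λ_{n+1} p_{n+1}(x) = (Σ_{i=1}^d x_i B_{n+1,i}^T) p_n(x) − (Σ_{i=1}^d B_{n+1,i}^T A_{n+1,i}) p_n(x) − (Σ_{i=1}^d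 B_{n+1,i}^T B_{n,i}^T) p_{n-1}(x). -/

import Mathlib

open MeasureTheory Matrix

private lemma sum_mulVec' {ι m n : Type*} [Fintype n] (s : Finset ι)
    (M : ι → Matrix m n ℝ) (v : n → ℝ) :
    (∑ i ∈ s, M i) *ᵥ v = ∑ i ∈ s, M i *ᵥ v := by
  ext k
  simp only [Matrix.mulVec, dotProduct, Finset.sum_apply, Finset.sum_apply',
    Matrix.sum_apply, Finset.sum_mul]
  rw [Finset.sum_comm]

/-- Theorem 3.2 of the paper: if the recurrence matrices are in canonical form
(`Λ_{n+1} = Σᵢ B_{n+1,i}ᵀ B_{n+1,i}` diagonal) and the stacked matrix `B_{n+1}` has full rank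
`r_{n+1}`, then `Λ_{n+1}` is positive definite and `p_{n+1}` can be evaluated directly from
`p_n` and `p_{n-1}`. -/
theorem canonical_basis_direct_evaluation
    (d n : ℕ) (hd : 1 ≤ d)
    (rnm1 rn rnp1 : ℕ) (hrnm1 : 0 < rnm1) (hrn : 0 < rn) (hrnp1 : 0 < rnp1)
    (pnm1 : (Fin d → ℝ) → Fin rnm1 → ℝ)
    (pn : (Fin d → ℝ) → Fin rn → ℝ)
    (pnp1 : (Fin d → ℝ) → Fin rnp1 → ℝ)
    (A : Fin d → Matrix (Fin rn) (Fin rn) ℝ)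
    (B : Fin d → Matrix (Fin rn) (Fin rnp1) ℝ)
    (Bn : Fin d → Matrix (Fin rnm1) (Fin rn) ℝ)
    (httr : ∀ (i : Fin d) (x : Fin d → ℝ),
      x i • pn x = (B i).mulVec (pnp1 x) + (A i).mulVec (pn x) + (Bn i)ᵀ.mulVec (pnm1 x))
    (hrank : (Matrix.of fun (ik : Fin d × Fin rn) (q : Fin rnp1) => B ik.1 ik.2 q).rank = rnp1)
    (hdiag : (∑ i, (B i)ᵀ * B i).IsDiag) :
    (∑ i, (B i)ᵀ * B i).PosDef ∧
      ∀ x : Fin d → ℝ,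
        (∑ i, (B i)ᵀ * B i).mulVec (pnp1 x) =
          (∑ i, x i • (B i)ᵀ).mulVec (pn x) - (∑ i, (B i)ᵀ * A i).mulVec (pn x) -
            (∑ i, (B i)ᵀ * (Bn i)ᵀ).mulVec (pnm1 x) := by
  set M : Matrix (Fin d × Fin rn) (Fin rnp1) ℝ :=
    Matrix.of fun (ik : Fin d × Fin rn) (q : Fin rnp1) => B ik.1 ik.2 q with hM
  have hinj : Function.Injective M.mulVecLin := by
    rw [← LinearMap.ker_eq_bot]
    have h := M.mulVecLin.finrank_range_add_finrank_ker
    rw [Matrix.rank] at hrank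
    simpa [hrank, Module.finrank_fintype_fun_eq_card] using h
  have hΛ : (∑ i, (B i)ᵀ * B i) = Mᵀ * M := by
    ext p q
    simp only [Matrix.sum_apply, Matrix.mul_apply, Matrix.transpose_apply, hM, Matrix.of_apply]
    rw [Fintype.sum_prod_type]
  constructor
  · rw [Matrix.posDef_iff_dotProduct_mulVec]
    constructor
    · rw [hΛ]
      have := Matrix.isHermitian_conjTranspose_mul_self M
      simpa using this
    · intro v hv
      have hMv : M *ᵥ v ≠ 0 := by
        intro hz
        exact hv (hinj (by simpa [Matrix.mulVecLin] using hz))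
      have key : v ⬝ᵥ (∑ i, (B i)ᵀ * B i) *ᵥ v = (M *ᵥ v) ⬝ᵥ (M *ᵥ v) := by
        rw [hΛ, ← Matrix.mulVec_mulVec, Matrix.dotProduct_mulVec, Matrix.vecMul_transpose]
      rw [Matrix.dotProduct_mulVec] at key
      simp only [star_trivial]
      rw [Matrix.dotProduct_mulVec, key]
      exact lt_of_le_of_ne (Finset.sum_nonneg fun i _ => mul_self_nonneg _)
        (fun h => hMv (dotProduct_self_eq_zero.mp h.symm))
  · intro x
    have h : ∀ i, (B i).mulVec (pnp1 x) =
        x i • pn x - (A i).mulVec (pn x) - (Bn i)ᵀ.mulVec (pnm1 x) := by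
      intro i
      rw [httr i x]; abel
    calc (∑ i, (B i)ᵀ * B i).mulVec (pnp1 x)
        = ∑ i, (B i)ᵀ.mulVec ((B i).mulVec (pnp1 x)) := by
          rw [sum_mulVec']
          exact Finset.sum_congr rfl fun i _ => by rw [← Matrix.mulVec_mulVec]
      _ = ∑ i, ((x i • (B i)ᵀ.mulVec (pn x)) - (B i)ᵀ.mulVec ((A i).mulVec (pn x))
            - (B i)ᵀ.mulVec ((Bn i)ᵀ.mulVec (pnm1 x))) := by
          refine Finset.sum_congr rfl fun i _ => ?_
          rw [h i, Matrix.mulVec_sub, Matrix.mulVec_sub, Matrix.mulVec_smul]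
      _ = _ := by
          rw [Finset.sum_sub_distrib, Finset.sum_sub_distrib, sum_mulVec', sum_mulVec',
            sum_mulVec']
          congr 1
          · congr 1
            · exact Finset.sum_congr rfl fun i _ => by rw [Matrix.smul_mulVec]
            · exact Finset.sum_congr rfl fun i _ => by rw [← Matrix.mulVec_mulVec]
          · exact Finset.sum_congr rfl fun i _ => by rw [← Matrix.mulVec_mulVec]
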